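/- Let p be prime and G the orthogonality graph on vectors in ℂ^p whose entries are p-th roots of unity. The set of vectors x with x_1 = x_2 (first two coordinates equal) is an independent set in G of size p^{p-1}. -/

import Mathlib

open Polynomial Finset in
lemma sum_roots_ne_zero (p : ℕ) (hp : p.Prime) (t : Fin p → ℂ)
    (ht : ∀ j, t j ^ p = 1) (i0 i1 : Fin p) (hne : i0 ≠ i1) (heq : t i0 = t i1) :
    ∑ j, t j ≠ 0 := by
  haveI : Fact p.Prime := ⟨hp⟩
  haveI : NeZero p := ⟨hp.ne_zero⟩
  intro hsum
  have hζ : IsPrimitiveRoot (Complex.exp (2 * Real.pi * Complex.I / p)) p :=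
    Complex.isPrimitiveRoot_exp p hp.ne_zero
  set ζ := Complex.exp (2 * Real.pi * Complex.I / p)
  choose a ha1 ha2 using fun j => hζ.eq_pow_of_pow_eq_one (ht j)
  set f : Polynomial ℚ := ∑ j : Fin p, X ^ a j with hf
  have haev : Polynomial.aeval ζ f = 0 := by
    rw [hf, map_sum]
    simpa [ha2] using hsum
  have hdvd : cyclotomic p ℚ ∣ f := by
    rw [Polynomial.cyclotomic_eq_minpoly_rat hζ hp.pos]
    exact minpoly.dvd ℚ ζ haev
  have hev1 : f.eval 1 = (p : ℚ) := by
    simp [hf, Polynomial.eval_finset_sum]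
  have hf0 : f ≠ 0 := by
    intro h
    rw [h] at hev1
    simp at hev1
    exact hp.ne_zero (by exact_mod_cast hev1.symm)
  obtain ⟨g, hg⟩ := hdvd
  have hcyc0 : cyclotomic p ℚ ≠ 0 := cyclotomic_ne_zero p ℚ
  have hg0 : g ≠ 0 := by rintro rfl; simp [hg] at hf0
  have hdegf : f.natDegree ≤ p - 1 := by
    refine Polynomial.natDegree_sum_le_of_forall_le _ _ fun j _ => ?_
    simpa using Nat.le_sub_one_of_lt (ha1 j)
  have hdegc : (cyclotomic p ℚ).natDegree = p - 1 := by
    rw [natDegree_cyclotomic, Nat.totient_prime hp]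
  have hgdeg : g.natDegree = 0 := by
    have h2 := Polynomial.natDegree_mul hcyc0 hg0
    rw [← hg, hdegc] at h2
    have hp1 : 1 ≤ p := hp.one_lt.le.trans' (by norm_num)
    omega
  obtain ⟨c, rfl⟩ := Polynomial.natDegree_eq_zero.mp hgdeg
  have hc : c = 1 := by
    have : (p : ℚ) = (p : ℚ) * c := by
      have := congrArg (Polynomial.eval 1) hg
      rwa [hev1, Polynomial.eval_mul, Polynomial.eval_one_cyclotomic_prime,
        Polynomial.eval_C] at this
    have hpne : (p : ℚ) ≠ 0 := Nat.cast_ne_zero.mpr hp.ne_zero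
    field_simp at this
    tauto
  subst hc
  rw [map_one, mul_one] at hg
  -- coefficient comparison at a i0
  have ha01 : a i1 = a i0 := hζ.pow_inj (ha1 i1) (ha1 i0) (by rw [ha2, ha2, heq])
  have hcoefff : f.coeff (a i0) = ∑ j : Fin p, if a i0 = a j then (1 : ℚ) else 0 := by
    rw [hf, Polynomial.finset_sum_coeff]
    simp only [Polynomial.coeff_X_pow]
  have hcoeffc : (cyclotomic p ℚ).coeff (a i0) = 1 := by
    rw [cyclotomic_prime ℚ p, Polynomial.finset_sum_coeff]
    simp only [Polynomial.coeff_X_pow]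
    simp [Finset.sum_ite_eq, Finset.mem_range.mpr (ha1 i0)]
  have hge2 : (2 : ℚ) ≤ ∑ j : Fin p, if a i0 = a j then (1 : ℚ) else 0 := by
    have hsub : ({i0, i1} : Finset (Fin p)) ⊆ Finset.univ := Finset.subset_univ _
    have h2 : ∑ j ∈ ({i0, i1} : Finset (Fin p)), (if a i0 = a j then (1:ℚ) else 0) ≤
        ∑ j : Fin p, (if a i0 = a j then (1:ℚ) else 0) :=
      Finset.sum_le_sum_of_subset_of_nonneg hsub (fun j _ _ => by positivity)
    calc (2 : ℚ) = ∑ j ∈ ({i0, i1} : Finset (Fin p)),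
          (if a i0 = a j then (1 : ℚ) else 0) := by
          rw [Finset.sum_pair hne]; simp [ha01]; norm_num
      _ ≤ _ := h2
  rw [← hcoefff, hg, hcoeffc] at hge2
  norm_num at hge2

/-- For `p` prime, in the orthogonality graph on vectors in `ℂ^p` with `p`-th root
of unity entries, the set of vectors whose first two coordinates are equal is an
independent set of size `p^(p-1)`. -/
theorem stmt13 (p : ℕ) (hp : p.Prime) :
    ({x : Fin p → ℂ | (∀ j, x j ^ p = 1) ∧
        x ⟨0, hp.pos⟩ = x ⟨1, hp.one_lt⟩}).ncard = p ^ (p - 1) ∧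
    ∀ x y : Fin p → ℂ,
      x ∈ {x : Fin p → ℂ | (∀ j, x j ^ p = 1) ∧ x ⟨0, hp.pos⟩ = x ⟨1, hp.one_lt⟩} →
      y ∈ {x : Fin p → ℂ | (∀ j, x j ^ p = 1) ∧ x ⟨0, hp.pos⟩ = x ⟨1, hp.one_lt⟩} →
      ∑ j, (starRingEnd ℂ) (x j) * y j ≠ 0 := by
  haveI : Fact p.Prime := ⟨hp⟩
  set i0 : Fin p := ⟨0, hp.pos⟩
  set i1 : Fin p := ⟨1, hp.one_lt⟩
  have hi01 : i0 ≠ i1 := by simp [i0, i1, Fin.ext_iff]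
  constructor
  · -- cardinality
    set S : Set (Fin p → ℂ) := {x : Fin p → ℂ | (∀ j, x j ^ p = 1) ∧ x i0 = x i1}
    have hζ : IsPrimitiveRoot (Complex.exp (2 * Real.pi * Complex.I / p)) p :=
      Complex.isPrimitiveRoot_exp p hp.ne_zero
    have e : S ≃ ({j : Fin p // j ≠ i1} → {z : ℂ // z ^ p = 1}) := by
      refine
        { toFun := fun x j => ⟨x.1 j.1, x.2.1 j.1⟩
          invFun := fun f =>
            ⟨fun j => if h : j = i1 then (f ⟨i0, hi01⟩).1 else (f ⟨j, h⟩).1, ?_, ?_⟩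
          left_inv := ?_
          right_inv := ?_ }
      · intro j
        by_cases h : j = i1 <;> simp [h, (f _).2]
      · show (if h : i0 = i1 then ((f ⟨i0, hi01⟩ : {z : ℂ // z ^ p = 1}) : ℂ)
            else (f ⟨i0, h⟩ : ℂ)) =
          (if h : i1 = i1 then ((f ⟨i0, hi01⟩ : {z : ℂ // z ^ p = 1}) : ℂ)
            else (f ⟨i1, h⟩ : ℂ))
        rw [dif_neg hi01, dif_pos rfl]
      · rintro ⟨x, hx1, hx2⟩
        ext j
        by_cases h : j = i1 <;> simp [h, hx2.symm]
      · intro f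
        ext j
        rcases j with ⟨j, hj⟩
        simp [dif_neg hj]
    have h1 : Nat.card S = p ^ (p - 1) := by
      rw [Nat.card_congr e, Nat.card_fun]
      have hR : Nat.card {z : ℂ // z ^ p = 1} = p := by
        have : {z : ℂ | z ^ p = 1} = ↑(Polynomial.nthRootsFinset p (1 : ℂ)) := by
          ext z; simp [Polynomial.mem_nthRootsFinset hp.pos (1 : ℂ)]
        calc Nat.card {z : ℂ // z ^ p = 1} = ({z : ℂ | z ^ p = 1}).ncard :=
              Nat.card_coe_set_eq _
          _ = p := by rw [this, Set.ncard_coe_finset, hζ.card_nthRootsFinset]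
      have hJ : Nat.card {j : Fin p // j ≠ i1} = p - 1 := by
        rw [Nat.card_eq_fintype_card, Fintype.card_subtype_compl]
        simp
      rw [hR, hJ]
    rw [← Nat.card_coe_set_eq]
    exact h1
  · rintro x y ⟨hx1, hx2⟩ ⟨hy1, hy2⟩
    refine sum_roots_ne_zero p hp (fun j => (starRingEnd ℂ) (x j) * y j) ?_ i0 i1 hi01 ?_
    · intro j
      rw [mul_pow, ← map_pow, hx1 j, hy1 j, map_one, one_mul]
    · show (starRingEnd ℂ) (x i0) * y i0 = (starRingEnd ℂ) (x i1) * y i1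
      rw [hx2, hy2]
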